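/- arXiv:2311.18783 — 5 statements merged into one kernel-verified Lean document; each statement's English description precedes it below -/
import Mathlib

section
/- Let A be a symmetric positive definite n×n real matrix and let Q_i ∈ ℝ^{n×n_i}, i = 1,…,N, be rectangular matrices. Define k̃₀ := max_{1≤i≤N} #{ j : Q_jᵀ A Q_i ≠ 0 }. Then for any vectors U_i ∈ ℝ^{n_i}, (∑_{i=1}^N Q_i U_i)ᵀ A (∑_{i=1}^N Q_i U_i) ≤ k̃₀ ∑_{i=1}^N U_iᵀ (Q_iᵀ A Q_i) U_i. -/
open Matrix Finset
open scoped Classical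

private lemma psd_amgm {m : ℕ} {A : Matrix (Fin m) (Fin m) ℝ} (hA : A.PosSemidef)
    (hs : Aᵀ = A) (x y : Fin m → ℝ) :
    x ⬝ᵥ (A *ᵥ y) ≤ (x ⬝ᵥ (A *ᵥ x) + y ⬝ᵥ (A *ᵥ y)) / 2 := by
  have h := hA.dotProduct_mulVec_nonneg (x - y)
  have hsym : x ⬝ᵥ (A *ᵥ y) = y ⬝ᵥ (A *ᵥ x) := by
    rw [dotProduct_mulVec, ← mulVec_transpose, hs, dotProduct_comm]
  simp only [star_trivial, sub_mulVec, mulVec_sub, dotProduct_sub, sub_dotProduct] at h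
  linarith

theorem stmt0 {n N : ℕ} (ni : Fin N → ℕ)
    (A : Matrix (Fin n) (Fin n) ℝ) (hA : A.PosDef)
    (Q : ∀ i : Fin N, Matrix (Fin n) (Fin (ni i)) ℝ)
    (U : ∀ i : Fin N, Fin (ni i) → ℝ) :
    (∑ i, Q i *ᵥ U i) ⬝ᵥ (A *ᵥ ∑ i, Q i *ᵥ U i) ≤
      ((Finset.univ.sup fun i : Fin N =>
          (Finset.univ.filter fun j : Fin N => (Q j)ᵀ * A * Q i ≠ 0).card : ℕ) : ℝ) *
        ∑ i, U i ⬝ᵥ (((Q i)ᵀ * A * Q i) *ᵥ U i) := by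
  have hpsd := hA.posSemidef
  have hs : Aᵀ = A := hA.1
  set v : ∀ i : Fin N, Fin n → ℝ := fun i => Q i *ᵥ U i with hv
  set B : Fin N → Fin N → ℝ := fun i j => v i ⬝ᵥ (A *ᵥ v j) with hB
  set S : Fin N → Fin N → Prop := fun i j => (Q j)ᵀ * A * Q i ≠ 0 with hS
  set k : ℕ := Finset.univ.sup fun i : Fin N =>
      (Finset.univ.filter fun j : Fin N => (Q j)ᵀ * A * Q i ≠ 0).card with hk
  -- identity: B i j = U i ⬝ᵥ ((Q i)ᵀ * A * Q j *ᵥ U j)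
  have hid : ∀ i j, B i j = U i ⬝ᵥ (((Q i)ᵀ * A * Q j) *ᵥ U j) := by
    intro i j
    simp only [hB, hv, dotProduct_mulVec, vecMul_mulVec, vecMul_vecMul, Matrix.mul_assoc]
  -- symmetry of the coupling
  have hSsymm : ∀ i j, S i j ↔ S j i := by
    intro i j
    have key : ∀ a b : Fin N, (Q a)ᵀ * A * Q b = 0 → (Q b)ᵀ * A * Q a = 0 := by
      intro a b h
      have : ((Q a)ᵀ * A * Q b)ᵀ = (Q b)ᵀ * A * Q a := by
        rw [transpose_mul, transpose_mul, transpose_transpose, hs, Matrix.mul_assoc]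
      rw [← this, h, transpose_zero]
    simp only [hS, ne_eq, not_iff_not]
    exact ⟨key _ _, key _ _⟩
  have hBzero : ∀ i j, (Q j)ᵀ * A * Q i = 0 → B i j = 0 := by
    intro i j hij
    have h0 : (Q i)ᵀ * A * Q j = 0 := by
      by_contra hne
      exact ((hSsymm i j).mpr hne) hij
    rw [hid, h0, zero_mulVec, dotProduct_zero]
  have hBnn : ∀ i, 0 ≤ B i i := fun i => by
    simpa using hpsd.dotProduct_mulVec_nonneg (v i)
  -- expand LHS
  have hm := map_sum (Matrix.mulVecLin A) v Finset.univ
  simp only [Matrix.mulVecLin_apply] at hm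
  have hdl : ∀ (w : Fin n → ℝ) (f : Fin N → Fin n → ℝ),
      w ⬝ᵥ (∑ j, f j) = ∑ j, w ⬝ᵥ f j := by
    intro w f
    simp only [dotProduct, Finset.sum_apply, Finset.mul_sum]
    exact Finset.sum_comm
  have hdr : ∀ (w : Fin n → ℝ) (f : Fin N → Fin n → ℝ),
      (∑ j, f j) ⬝ᵥ w = ∑ j, f j ⬝ᵥ w := by
    intro w f
    simp only [dotProduct, Finset.sum_apply, Finset.sum_mul]
    exact Finset.sum_comm
  have hLHS : (∑ i, v i) ⬝ᵥ (A *ᵥ ∑ i, v i) = ∑ i, ∑ j, B i j := by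
    rw [hm, hdr]
    exact Finset.sum_congr rfl fun i _ => hdl _ _
  rw [show (∑ i, Q i *ᵥ U i) ⬝ᵥ (A *ᵥ ∑ i, Q i *ᵥ U i) = ∑ i, ∑ j, B i j from hLHS]
  have hRHS : ∀ i, U i ⬝ᵥ (((Q i)ᵀ * A * Q i) *ᵥ U i) = B i i := fun i => (hid i i).symm
  simp only [hRHS]
  -- restrict to coupled pairs
  have hrestrict : ∀ i, ∑ j, B i j = ∑ j ∈ Finset.univ.filter (S i), B i j := by
    intro i
    rw [Finset.sum_filter_of_ne]
    intro j _ hne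
    by_contra h
    exact hne (hBzero i j h)
  have hswap : (∑ i, ∑ j ∈ Finset.univ.filter (S i), B j j)
      = ∑ i, ∑ j ∈ Finset.univ.filter (S i), B i i := by
    simp only [Finset.sum_filter]
    rw [Finset.sum_comm]
    refine Finset.sum_congr rfl fun a _ => Finset.sum_congr rfl fun b _ => ?_
    have h := hSsymm b a
    simp only [hS] at h
    exact if_congr h rfl rfl
  calc ∑ i, ∑ j, B i j
      = ∑ i, ∑ j ∈ Finset.univ.filter (S i), B i j :=
        Finset.sum_congr rfl fun i _ => hrestrict i
    _ ≤ ∑ i, ∑ j ∈ Finset.univ.filter (S i), (B i i + B j j) / 2 := by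
        refine Finset.sum_le_sum fun i _ => Finset.sum_le_sum fun j _ => ?_
        exact psd_amgm hpsd hs (v i) (v j)
    _ = (∑ i, ∑ j ∈ Finset.univ.filter (S i), B i i) / 2
        + (∑ i, ∑ j ∈ Finset.univ.filter (S i), B j j) / 2 := by
        simp only [add_div, Finset.sum_add_distrib, Finset.sum_div]
    _ = ∑ i, ((Finset.univ.filter (S i)).card : ℝ) * B i i := by
        rw [hswap, add_halves]
        refine Finset.sum_congr rfl fun i _ => ?_
        rw [Finset.sum_const, nsmul_eq_mul]
    _ ≤ ∑ i, (k : ℝ) * B i i := by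
        refine Finset.sum_le_sum fun i _ => ?_
        refine mul_le_mul_of_nonneg_right ?_ (hBnn i)
        have := Finset.le_sup (f := fun i : Fin N =>
          (Finset.univ.filter fun j : Fin N => (Q j)ᵀ * A * Q i ≠ 0).card) (Finset.mem_univ i)
        exact_mod_cast this
    _ = (k : ℝ) * ∑ i, B i i := by rw [Finset.mul_sum]
end

section
/- Let H and H_D be finite-dimensional real inner product spaces, A : H → H and B : H_D → H_D symmetric positive definite linear operators (defining bilinear forms a(u,v) = (Au,v) and b(u_D,v_D) = (Bu_D,v_D)_D). Suppose R : H_D → H is a surjective linear map such that (i) a(Ru_D, Ru_D) ≤ c_R b(u_D, u_D) for all u_D ∈ H_D, and (ii) for every u ∈ H there exists u_D ∈ H_D with R u_D = u and c_T b(u_D,u_D) ≤ a(u,u). Then for all u ∈ H, c_T a(u,u) ≤ a(R B⁻¹ R* A u, u) ≤ c_R a(u,u), where R* is the adjoint of R with respect to the two inner products. -/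
open scoped RealInnerProductSpace

lemma cs_aux {E : Type*} [NormedAddCommGroup E] [InnerProductSpace ℝ E]
    (A : E →ₗ[ℝ] E) (hs : ∀ x y : E, ⟪A x, y⟫ = ⟪x, A y⟫)
    (hp : ∀ x : E, 0 ≤ ⟪A x, x⟫) (x y : E) :
    ⟪A x, y⟫ ^ 2 ≤ ⟪A x, x⟫ * ⟪A y, y⟫ := by
  have key : ∀ t : ℝ, 0 ≤ ⟪A y, y⟫ * (t * t) + (2 * ⟪A x, y⟫) * t + ⟪A x, x⟫ := by
    intro t
    have h0 := hp (x + t • y)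
    have hexp : ⟪A (x + t • y), x + t • y⟫ =
        ⟪A y, y⟫ * (t * t) + (2 * ⟪A x, y⟫) * t + ⟪A x, x⟫ := by
      have hc : ⟪A y, x⟫ = ⟪A x, y⟫ := by
        rw [hs y x, real_inner_comm]
      simp only [map_add, map_smul, inner_add_left, inner_add_right,
        real_inner_smul_left, real_inner_smul_right, hc]
      ring
    rw [hexp] at h0
    exact h0
  have hd : discrim ⟪A y, y⟫ (2 * ⟪A x, y⟫) ⟪A x, x⟫ ≤ 0 := discrim_le_zero key
  rw [discrim] at hd
  nlinarith [hd]

theorem stmt1 {H HD : Type*}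
    [NormedAddCommGroup H] [InnerProductSpace ℝ H] [FiniteDimensional ℝ H]
    [NormedAddCommGroup HD] [InnerProductSpace ℝ HD] [FiniteDimensional ℝ HD]
    (A : H →ₗ[ℝ] H) (B : HD →ₗ[ℝ] HD)
    (hAsym : ∀ u v : H, ⟪A u, v⟫ = ⟪u, A v⟫)
    (hApos : ∀ u : H, u ≠ 0 → 0 < ⟪A u, u⟫)
    (hBsym : ∀ uD vD : HD, ⟪B uD, vD⟫ = ⟪uD, B vD⟫)
    (hBpos : ∀ uD : HD, uD ≠ 0 → 0 < ⟪B uD, uD⟫)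
    (Binv : HD →ₗ[ℝ] HD)
    (hBinv₁ : Binv ∘ₗ B = LinearMap.id) (hBinv₂ : B ∘ₗ Binv = LinearMap.id)
    (R : HD →ₗ[ℝ] H) (hR : Function.Surjective R)
    (cR cT : ℝ)
    (hcont : ∀ uD : HD, ⟪A (R uD), R uD⟫ ≤ cR * ⟪B uD, uD⟫)
    (hstab : ∀ u : H, ∃ uD : HD, R uD = u ∧ cT * ⟪B uD, uD⟫ ≤ ⟪A u, u⟫) :
    ∀ u : H,
      cT * ⟪A u, u⟫ ≤ ⟪A (R (Binv (LinearMap.adjoint R (A u)))), u⟫ ∧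
      ⟪A (R (Binv (LinearMap.adjoint R (A u)))), u⟫ ≤ cR * ⟪A u, u⟫ := by
  have hApsd : ∀ x : H, 0 ≤ ⟪A x, x⟫ := by
    intro x
    by_cases hx : x = 0
    · simp [hx]
    · exact (hApos x hx).le
  have hBpsd : ∀ x : HD, 0 ≤ ⟪B x, x⟫ := by
    intro x
    by_cases hx : x = 0
    · simp [hx]
    · exact (hBpos x hx).le
  intro u
  by_cases hu : u = 0
  · subst hu
    simp
  have hBv : ∀ z : HD, B (Binv z) = z := by
    intro z
    have := congrArg (fun f : HD →ₗ[ℝ] HD => f z) hBinv₂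
    simpa using this
  -- let v denote Binv (adjoint R (A u))
  obtain ⟨v, hv⟩ : ∃ v : HD, v = Binv (LinearMap.adjoint R (A u)) := ⟨_, rfl⟩
  rw [← hv]
  have hBv' : B v = LinearMap.adjoint R (A u) := by rw [hv]; exact hBv _
  -- key identity
  have key1 : ⟪A (R v), u⟫ = ⟪B v, v⟫ :=
    calc ⟪A (R v), u⟫ = ⟪R v, A u⟫ := hAsym _ _
      _ = ⟪A u, R v⟫ := real_inner_comm _ _
      _ = ⟪LinearMap.adjoint R (A u), v⟫ := (LinearMap.adjoint_inner_left _ _ _).symm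
      _ = ⟪B v, v⟫ := by rw [hBv']
  obtain ⟨uD, huD, hstabD⟩ := hstab u
  have halpha : 0 < ⟪A u, u⟫ := hApos u hu
  have huD0 : uD ≠ 0 := by
    rintro rfl
    exact hu (by simpa using huD.symm)
  have hbuD : 0 < ⟪B uD, uD⟫ := hBpos uD huD0
  have halpha_eq : ⟪A u, u⟫ = ⟪B v, uD⟫ :=
    calc ⟪A u, u⟫ = ⟪A u, R uD⟫ := by rw [huD]
      _ = ⟪LinearMap.adjoint R (A u), uD⟫ := (LinearMap.adjoint_inner_left _ _ _).symm
      _ = ⟪B v, uD⟫ := by rw [hBv']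
  have hcR : 0 < cR := by
    have h1 := hcont uD
    rw [huD] at h1
    nlinarith
  have hv0 : v ≠ 0 := by
    intro h
    have h2 : ⟪A u, u⟫ = 0 := by
      rw [halpha_eq, h, map_zero, inner_zero_left]
    linarith
  have hbv : 0 < ⟪B v, v⟫ := hBpos v hv0
  constructor
  · -- lower bound
    by_cases hcT : cT ≤ 0
    · calc cT * ⟪A u, u⟫ ≤ 0 := mul_nonpos_of_nonpos_of_nonneg hcT halpha.le
        _ ≤ ⟪A (R v), u⟫ := by rw [key1]; exact hbv.le
    · push_neg at hcT
      have hcsB := cs_aux B hBsym hBpsd v uD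
      rw [key1]
      have hb' : ⟪B uD, uD⟫ ≤ ⟪A u, u⟫ / cT := by
        rw [le_div_iff₀ hcT]; linarith
      nlinarith [hcsB, halpha_eq, hbv, halpha]
  · -- upper bound
    have hcsA := cs_aux A hAsym hApsd (R v) u
    have h1 := hcont v
    rw [key1]
    nlinarith [hcsA, key1, hbv]
end

section
/- Under the hypotheses of the Fictitious Space Lemma (surjective R with continuity constant c_R and stable decomposition constant c_T), all eigenvalues of the operator R B⁻¹ R* A lie in the interval [c_T, c_R], and hence the spectral condition number of R B⁻¹ R* A satisfies κ₂(R B⁻¹ R* A) ≤ c_R / c_T. -/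
open scoped RealInnerProductSpace

theorem stmt2 {H HD : Type*}
    [NormedAddCommGroup H] [InnerProductSpace ℝ H] [FiniteDimensional ℝ H]
    [NormedAddCommGroup HD] [InnerProductSpace ℝ HD] [FiniteDimensional ℝ HD]
    (A : H →ₗ[ℝ] H) (B : HD →ₗ[ℝ] HD)
    (hAsym : ∀ u v : H, ⟪A u, v⟫ = ⟪u, A v⟫)
    (hApos : ∀ u : H, u ≠ 0 → 0 < ⟪A u, u⟫)
    (hBsym : ∀ uD vD : HD, ⟪B uD, vD⟫ = ⟪uD, B vD⟫)
    (hBpos : ∀ uD : HD, uD ≠ 0 → 0 < ⟪B uD, uD⟫)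
    (Binv : HD →ₗ[ℝ] HD)
    (hBinv₁ : Binv ∘ₗ B = LinearMap.id) (hBinv₂ : B ∘ₗ Binv = LinearMap.id)
    (R : HD →ₗ[ℝ] H) (hR : Function.Surjective R)
    (cR cT : ℝ) (hcT : 0 < cT)
    (hcont : ∀ uD : HD, ⟪A (R uD), R uD⟫ ≤ cR * ⟪B uD, uD⟫)
    (hstab : ∀ u : H, ∃ uD : HD, R uD = u ∧ cT * ⟪B uD, uD⟫ ≤ ⟪A u, u⟫) :
    (∀ μ : ℝ,
        Module.End.HasEigenvalue
          (R ∘ₗ Binv ∘ₗ LinearMap.adjoint R ∘ₗ A : Module.End ℝ H) μ →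
        μ ∈ Set.Icc cT cR) ∧
    (∀ μ₁ μ₂ : ℝ,
        Module.End.HasEigenvalue
          (R ∘ₗ Binv ∘ₗ LinearMap.adjoint R ∘ₗ A : Module.End ℝ H) μ₁ →
        Module.End.HasEigenvalue
          (R ∘ₗ Binv ∘ₗ LinearMap.adjoint R ∘ₗ A : Module.End ℝ H) μ₂ →
        μ₁ / μ₂ ≤ cR / cT) := by
  have hBnonneg : ∀ x : HD, 0 ≤ ⟪B x, x⟫ := by
    intro x
    by_cases hx : x = 0
    · simp [hx]
    · exact (hBpos x hx).le
  have hBBinv : ∀ x : HD, B (Binv x) = x := fun x => LinearMap.ext_iff.mp hBinv₂ x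
  have key : ∀ μ : ℝ,
      Module.End.HasEigenvalue
        (R ∘ₗ Binv ∘ₗ LinearMap.adjoint R ∘ₗ A : Module.End ℝ H) μ →
      μ ∈ Set.Icc cT cR := by
    intro μ hμ
    obtain ⟨u, hu⟩ := hμ.exists_hasEigenvector
    have hu0 : u ≠ 0 := hu.right
    have hTu : R (Binv (LinearMap.adjoint R (A u))) = μ • u := hu.apply_eq_smul
    set vD : HD := Binv (LinearMap.adjoint R (A u)) with hvD
    have hBv : B vD = LinearMap.adjoint R (A u) := hBBinv _
    have hau : 0 < ⟪A u, u⟫ := hApos u hu0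
    -- b(vD, vD) = μ * a(u,u)
    have hbvv : ⟪B vD, vD⟫ = μ * ⟪A u, u⟫ := by
      rw [hBv, LinearMap.adjoint_inner_left, hTu, real_inner_smul_right]
    obtain ⟨uD, hRuD, hst⟩ := hstab u
    have huD0 : uD ≠ 0 := by
      intro h
      apply hu0
      rw [← hRuD, h, map_zero]
    have hbuu : 0 < ⟪B uD, uD⟫ := hBpos uD huD0
    -- b(vD, uD) = a(u,u)
    have hbvu : ⟪B vD, uD⟫ = ⟪A u, u⟫ := by
      rw [hBv, LinearMap.adjoint_inner_left, hRuD]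
    -- Cauchy-Schwarz for b
    have hsymm : ⟪B uD, vD⟫ = ⟪B vD, uD⟫ := by
      rw [hBsym uD vD, real_inner_comm]
    have hcs : ⟪B vD, uD⟫ ^ 2 ≤ ⟪B vD, vD⟫ * ⟪B uD, uD⟫ := by
      set t : ℝ := ⟪B vD, uD⟫ / ⟪B uD, uD⟫ with ht
      have h0 := hBnonneg (vD - t • uD)
      have hexp : ⟪B (vD - t • uD), vD - t • uD⟫
          = ⟪B vD, vD⟫ - 2 * t * ⟪B vD, uD⟫ + t ^ 2 * ⟪B uD, uD⟫ := by
        rw [map_sub, map_smul, inner_sub_left, inner_sub_right, inner_sub_right,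
          real_inner_smul_left, real_inner_smul_left, real_inner_smul_right,
          real_inner_smul_right, hsymm]
        ring
      rw [hexp] at h0
      have htval : t * ⟪B uD, uD⟫ = ⟪B vD, uD⟫ := by
        rw [ht, div_mul_cancel₀ _ hbuu.ne']
      nlinarith [h0, hbuu]
    -- lower bound
    have hstab' : ⟪B uD, uD⟫ ≤ ⟪A u, u⟫ / cT := by
      rw [le_div_iff₀ hcT]
      linarith [hst]
    have hlow : cT ≤ μ := by
      have h1 : ⟪A u, u⟫ ^ 2 ≤ (μ * ⟪A u, u⟫) * (⟪A u, u⟫ / cT) := by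
        calc ⟪A u, u⟫ ^ 2 = ⟪B vD, uD⟫ ^ 2 := by rw [hbvu]
          _ ≤ ⟪B vD, vD⟫ * ⟪B uD, uD⟫ := hcs
          _ ≤ (μ * ⟪A u, u⟫) * (⟪A u, u⟫ / cT) := by
              rw [hbvv]
              have hμnn : 0 ≤ μ * ⟪A u, u⟫ := by
                rw [← hbvv]; exact hBnonneg vD
              exact mul_le_mul_of_nonneg_left hstab' hμnn
      have h2 : cT * ⟪A u, u⟫ ^ 2 ≤ μ * ⟪A u, u⟫ ^ 2 := by
        have h3 := mul_le_mul_of_nonneg_left h1 hcT.le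
        calc cT * ⟪A u, u⟫ ^ 2
            ≤ cT * (μ * ⟪A u, u⟫ * (⟪A u, u⟫ / cT)) := h3
          _ = μ * ⟪A u, u⟫ ^ 2 := by field_simp
      nlinarith [h2, pow_pos hau 2]
    have hμpos : 0 < μ := lt_of_lt_of_le hcT hlow
    -- upper bound
    have hupb := hcont vD
    rw [hTu] at hupb
    have hAuu : ⟪A (μ • u), μ • u⟫ = μ ^ 2 * ⟪A u, u⟫ := by
      rw [map_smul, real_inner_smul_left, real_inner_smul_right]
      ring
    rw [hAuu, hbvv] at hupb
    have hhigh : μ ≤ cR := by nlinarith [hupb, mul_pos hμpos hau]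
    exact ⟨hlow, hhigh⟩
  refine ⟨key, ?_⟩
  intro μ₁ μ₂ h1 h2
  obtain ⟨h1l, h1r⟩ := key μ₁ h1
  obtain ⟨h2l, h2r⟩ := key μ₂ h2
  exact div_le_div₀ (le_trans hcT.le (le_trans h1l h1r)) h1r hcT h2l
end

section
/- Let A ∈ ℝ^{n×n} be SPD, with restriction matrices R_i, partition-of-unity matrices D_i satisfying ∑ R_iᵀD_iR_i = I, local SPD matrices A_i^Neu ∈ ℝ^{n_i×n_i} satisfying ∑_{i=1}^N (R_iU)ᵀ A_i^Neu (R_iU) ≤ k₁ UᵀAU for all U ∈ ℝ^n, and projections ξ_{0i} on ℝ^{n_i} such that R_iᵀ D_i ξ_{0i} R_i U lies in the coarse space V_G = range(Z) for all U and all i. Define τ₀ := max_{1≤j≤N} max_{V_j ≠ 0} ((R_j A R_jᵀ D_j(I−ξ_{0j})V_j, D_j(I−ξ_{0j})V_j) / (A_j^Neu V_j, V_j)). Then for every U ∈ ℝ^n there exists (U₀, (U_i)) with R_AS(U₀,(U_i)) = U and (E U₀, U₀) + ∑_{i=1}^N (R_i A R_iᵀ U_i, U_i) ≤ (1 + k₁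 τ₀) UᵀAU. -/
open Matrix

lemma sum_mulVec' {ι : Type*} (s : Finset ι) {m k : ℕ} (M : ι → Matrix (Fin m) (Fin k) ℝ)
    (v : Fin k → ℝ) : (∑ i ∈ s, M i) *ᵥ v = ∑ i ∈ s, M i *ᵥ v := by
  ext j
  simp [Matrix.mulVec, dotProduct, Matrix.sum_apply, Finset.sum_mul]
  rw [Finset.sum_comm]

lemma mulVec_sum' {ι : Type*} (s : Finset ι) {m k : ℕ} (M : Matrix (Fin m) (Fin k) ℝ)
    (v : ι → Fin k → ℝ) : M *ᵥ (∑ i ∈ s, v i) = ∑ i ∈ s, M *ᵥ v i := by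
  ext j
  simp [Matrix.mulVec, dotProduct, Finset.sum_apply, Finset.mul_sum]
  rw [Finset.sum_comm]

theorem stmt7 {n n0 N : ℕ} (ni : Fin N → ℕ)
    (A : Matrix (Fin n) (Fin n) ℝ) (hA : A.PosDef)
    (R : ∀ i : Fin N, Matrix (Fin (ni i)) (Fin n) ℝ)
    (D : ∀ i : Fin N, Matrix (Fin (ni i)) (Fin (ni i)) ℝ)
    (hD : ∀ i, (D i).IsDiag)
    (hPoU : ∑ i, (R i)ᵀ * D i * R i = 1)
    (ANeu : ∀ i : Fin N, Matrix (Fin (ni i)) (Fin (ni i)) ℝ)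
    (hANeu : ∀ i, (ANeu i).PosDef)
    (k1 : ℝ)
    (hk1 : ∀ U : Fin n → ℝ,
      ∑ i, (R i *ᵥ U) ⬝ᵥ (ANeu i *ᵥ (R i *ᵥ U)) ≤ k1 * (U ⬝ᵥ (A *ᵥ U)))
    (Z : Matrix (Fin n) (Fin n0) ℝ)
    (hZ : Function.Injective Z.mulVec)
    (P0 : Matrix (Fin n) (Fin n) ℝ)
    (hP0 : P0 = Z * (Zᵀ * A * Z)⁻¹ * Zᵀ * A)
    (xi : ∀ i : Fin N, Matrix (Fin (ni i)) (Fin (ni i)) ℝ)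
    (hxi : ∀ (i : Fin N) (U : Fin n → ℝ),
      ∃ c : Fin n0 → ℝ, Z *ᵥ c = (R i)ᵀ *ᵥ (D i *ᵥ (xi i *ᵥ (R i *ᵥ U))))
    (τ0 : ℝ)
    (hτ0 : ∀ (j : Fin N) (V : Fin (ni j) → ℝ),
      ((R j * A * (R j)ᵀ) *ᵥ (D j *ᵥ ((1 - xi j) *ᵥ V))) ⬝ᵥ (D j *ᵥ ((1 - xi j) *ᵥ V)) ≤
        τ0 * ((ANeu j *ᵥ V) ⬝ᵥ V)) :
    ∀ U : Fin n → ℝ,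
      ∃ (U0 : Fin n0 → ℝ) (Ui : ∀ i, Fin (ni i) → ℝ),
        Z *ᵥ U0 + (1 - P0) *ᵥ ∑ i, (R i)ᵀ *ᵥ Ui i = U ∧
        ((Zᵀ * A * Z) *ᵥ U0) ⬝ᵥ U0 +
            ∑ i, ((R i * A * (R i)ᵀ) *ᵥ Ui i) ⬝ᵥ Ui i ≤
          (1 + k1 * τ0) * (U ⬝ᵥ (A *ᵥ U)) := by
  intro U
  rcases Nat.eq_zero_or_pos n with hn | hn
  · subst hn
    refine ⟨0, fun _ => 0, ?_, ?_⟩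
    · funext x; exact x.elim0
    · simp [dotProduct]
  -- main case
  have hAsymm : Aᵀ = A := by
    rw [← Matrix.conjTranspose_eq_transpose_of_trivial]; exact hA.1
  have hφ : ∀ x y : Fin n → ℝ, x ⬝ᵥ (A *ᵥ y) = y ⬝ᵥ (A *ᵥ x) := by
    intro x y
    rw [dotProduct_mulVec, ← Matrix.mulVec_transpose, hAsymm, dotProduct_comm]
  set E := Zᵀ * A * Z with hE
  have hEpd : E.PosDef := by
    refine Matrix.PosDef.of_dotProduct_mulVec_pos ?_ ?_
    · show Eᴴ = E
      rw [Matrix.conjTranspose_eq_transpose_of_trivial, hE]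
      simp [Matrix.transpose_mul, Matrix.transpose_transpose, hAsymm, Matrix.mul_assoc]
    · intro x hx
      have hZx : Z *ᵥ x ≠ 0 := fun h => hx (hZ (h.trans (Z.mulVec_zero).symm))
      have h2 := hA.dotProduct_mulVec_pos hZx
      simp only [star_trivial] at h2 ⊢
      rw [hE, ← Matrix.mulVec_mulVec, ← Matrix.mulVec_mulVec, dotProduct_mulVec,
        ← Matrix.mulVec_transpose, Matrix.transpose_transpose]
      exact h2
  have hdet : IsUnit E.det := (Matrix.isUnit_iff_isUnit_det E).mp hEpd.isUnit
  have hEinv : E * E⁻¹ = 1 := Matrix.mul_nonsing_inv E hdet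
  have hinvE : E⁻¹ * E = 1 := Matrix.nonsing_inv_mul E hdet
  have hP0Z : P0 * Z = Z := by
    rw [hP0]
    calc Z * E⁻¹ * Zᵀ * A * Z = Z * (E⁻¹ * E) := by rw [hE]; simp only [Matrix.mul_assoc]
    _ = Z := by rw [hinvE, Matrix.mul_one]
  set U0 : Fin n0 → ℝ := (E⁻¹ * (Zᵀ * A)) *ᵥ U with hU0
  set Ui : ∀ i, Fin (ni i) → ℝ := fun i => D i *ᵥ ((1 - xi i) *ᵥ (R i *ᵥ U)) with hUi
  have hEU0 : E *ᵥ U0 = (Zᵀ * A) *ᵥ U := by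
    rw [hU0, Matrix.mulVec_mulVec, ← Matrix.mul_assoc, hEinv, Matrix.one_mul]
  have hZU0 : Z *ᵥ U0 = P0 *ᵥ U := by
    rw [hU0, Matrix.mulVec_mulVec, hP0]
    congr 1
    simp only [Matrix.mul_assoc]
  set c : Fin N → Fin n0 → ℝ := fun i => (hxi i U).choose with hc
  have hkey : ∀ i, (R i)ᵀ *ᵥ Ui i = ((R i)ᵀ * D i * R i) *ᵥ U - Z *ᵥ c i := by
    intro i
    simp only [hUi]
    have h1 : (1 - xi i) *ᵥ (R i *ᵥ U) = R i *ᵥ U - xi i *ᵥ (R i *ᵥ U) := by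
      rw [Matrix.sub_mulVec, Matrix.one_mulVec]
    rw [h1, Matrix.mulVec_sub, Matrix.mulVec_sub, (hxi i U).choose_spec.symm,
      Matrix.mulVec_mulVec, Matrix.mulVec_mulVec]
  have hS : ∑ i, (R i)ᵀ *ᵥ Ui i = U - Z *ᵥ (∑ i, c i) := by
    rw [Finset.sum_congr rfl (fun i _ => hkey i), Finset.sum_sub_distrib,
      ← sum_mulVec', hPoU, Matrix.one_mulVec, mulVec_sum']
  refine ⟨U0, Ui, ?_, ?_⟩
  · have h2 : P0 *ᵥ (Z *ᵥ ∑ i, c i) = Z *ᵥ ∑ i, c i := by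
      rw [Matrix.mulVec_mulVec, hP0Z]
    rw [hS, Matrix.sub_mulVec, Matrix.one_mulVec, Matrix.mulVec_sub, h2, hZU0]
    abel
  · -- inequality
    set P : Fin n → ℝ := Z *ᵥ U0 with hP
    set w : Fin n → ℝ := U - P with hw
    have hPdot : ∀ v : Fin n → ℝ, P ⬝ᵥ (A *ᵥ v) = U0 ⬝ᵥ ((Zᵀ * A) *ᵥ v) := by
      intro v
      rw [hP, dotProduct_comm (Z *ᵥ U0) (A *ᵥ v), dotProduct_mulVec,
        ← Matrix.mulVec_transpose, Matrix.mulVec_mulVec,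
        dotProduct_comm]
    have horthz : (Zᵀ * A) *ᵥ w = 0 := by
      rw [hw, Matrix.mulVec_sub, hP, Matrix.mulVec_mulVec, ← hE, hEU0, sub_self]
    have hPAw : P ⬝ᵥ (A *ᵥ w) = 0 := by
      rw [hPdot, horthz, dotProduct_zero]
    have hU : U = P + w := by rw [hw]; abel
    have hAU : A *ᵥ U = A *ᵥ P + A *ᵥ w := by rw [← Matrix.mulVec_add, ← hU]
    have hterm1 : (E *ᵥ U0) ⬝ᵥ U0 = P ⬝ᵥ (A *ᵥ P) := by
      have h2 : ((Zᵀ * A) *ᵥ U) ⬝ᵥ U0 = P ⬝ᵥ (A *ᵥ U) := by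
        rw [hPdot U, dotProduct_comm]
      have h1 : P ⬝ᵥ (A *ᵥ U) = P ⬝ᵥ (A *ᵥ P) + P ⬝ᵥ (A *ᵥ w) := by
        rw [hAU, dotProduct_add]
      rw [hEU0, h2, h1, hPAw, add_zero]
    have hsplit : U ⬝ᵥ (A *ᵥ U) = P ⬝ᵥ (A *ᵥ P) + w ⬝ᵥ (A *ᵥ w) := by
      calc U ⬝ᵥ (A *ᵥ U) = (P + w) ⬝ᵥ (A *ᵥ P + A *ᵥ w) := by rw [← hU, ← hAU]
      _ = P ⬝ᵥ (A *ᵥ P) + P ⬝ᵥ (A *ᵥ w) + (w ⬝ᵥ (A *ᵥ P) + w ⬝ᵥ (A *ᵥ w)) := by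
          rw [add_dotProduct, dotProduct_add, dotProduct_add]
      _ = P ⬝ᵥ (A *ᵥ P) + w ⬝ᵥ (A *ᵥ w) := by
          rw [hφ w P, hPAw]; ring
    have hwnn : 0 ≤ w ⬝ᵥ (A *ᵥ w) := by simpa using hA.posSemidef.dotProduct_mulVec_nonneg w
    have hterm1le : (E *ᵥ U0) ⬝ᵥ U0 ≤ U ⬝ᵥ (A *ᵥ U) := by
      rw [hterm1, hsplit]; linarith
    -- τ0 ≥ 0
    have hj : ∃ j, 0 < ni j := by
      by_contra hcon
      push_neg at hcon
      have h0 : ∀ i : Fin N, (R i)ᵀ * D i * R i = 0 := by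
        intro i
        ext a b
        rw [Matrix.mul_apply]
        apply Finset.sum_eq_zero
        intro x _
        have := x.2
        have := hcon i
        omega
      rw [Finset.sum_congr rfl (fun i _ => h0 i), Finset.sum_const, smul_zero] at hPoU
      have := congrFun (congrFun hPoU ⟨0, hn⟩) ⟨0, hn⟩
      simp [Matrix.one_apply] at this
    obtain ⟨j, hjpos⟩ := hj
    have hτ0nn : 0 ≤ τ0 := by
      set V : Fin (ni j) → ℝ := fun _ => 1 with hV
      have hVne : V ≠ 0 := by
        intro h
        have := congrFun h ⟨0, hjpos⟩
        simp [hV] at this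
      have hpos : 0 < (ANeu j *ᵥ V) ⬝ᵥ V := by
        have h := (hANeu j).dotProduct_mulVec_pos hVne
        simp only [star_trivial] at h
        rwa [dotProduct_comm] at h
      have hnnL : 0 ≤ ((R j * A * (R j)ᵀ) *ᵥ (D j *ᵥ ((1 - xi j) *ᵥ V))) ⬝ᵥ
          (D j *ᵥ ((1 - xi j) *ᵥ V)) := by
        have hps : (R j * A * (R j)ᵀ).PosSemidef := by
          have h := hA.posSemidef.mul_mul_conjTranspose_same (R j)
          rwa [Matrix.conjTranspose_eq_transpose_of_trivial] at h
        have h := hps.dotProduct_mulVec_nonneg (D j *ᵥ ((1 - xi j) *ᵥ V))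
        simp only [star_trivial] at h
        rwa [dotProduct_comm] at h
      nlinarith [hτ0 j V]
    have hloc : ∑ i, ((R i * A * (R i)ᵀ) *ᵥ Ui i) ⬝ᵥ Ui i ≤
        τ0 * ∑ i, (ANeu i *ᵥ (R i *ᵥ U)) ⬝ᵥ (R i *ᵥ U) := by
      rw [Finset.mul_sum]
      apply Finset.sum_le_sum
      intro i _
      simp only [hUi]
      exact hτ0 i (R i *ᵥ U)
    have hsum2 : ∑ i, (ANeu i *ᵥ (R i *ᵥ U)) ⬝ᵥ (R i *ᵥ U) ≤ k1 * (U ⬝ᵥ (A *ᵥ U)) := by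
      calc ∑ i, (ANeu i *ᵥ (R i *ᵥ U)) ⬝ᵥ (R i *ᵥ U)
          = ∑ i, (R i *ᵥ U) ⬝ᵥ (ANeu i *ᵥ (R i *ᵥ U)) :=
            Finset.sum_congr rfl fun i _ => dotProduct_comm _ _
      _ ≤ k1 * (U ⬝ᵥ (A *ᵥ U)) := hk1 U
    have hmul := mul_le_mul_of_nonneg_left hsum2 hτ0nn
    have hring : (1 + k1 * τ0) * (U ⬝ᵥ (A *ᵥ U)) =
        U ⬝ᵥ (A *ᵥ U) + τ0 * (k1 * (U ⬝ᵥ (A *ᵥ U))) := by ring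
    rw [hring]
    linarith
end

section
/- Let M ∈ ℝ^{m×m} be symmetric positive semidefinite and N ∈ ℝ^{m×m} symmetric positive definite, and consider the generalized eigenvalue problem M v = λ N v with eigenpairs (v_k, λ_k), k = 1,…,m, N-orthonormal. For a threshold τ > 0 let π be the projection onto span{v_k : λ_k > τ} parallel to span{v_k : λ_k ≤ τ}. Then for all u ∈ ℝ^m, ((I − π)u)ᵀ M (I − π)u ≤ τ uᵀ N u. -/
open Matrix Finset
open scoped Classical

private lemma expand_aux {m : ℕ} (N : Matrix (Fin m) (Fin m) ℝ) (hsym : Nᵀ = N)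
    (v : Fin m → (Fin m → ℝ))
    (horth : ∀ k l, (N *ᵥ v k) ⬝ᵥ v l = if k = l then 1 else 0)
    (u : Fin m → ℝ) :
    u = ∑ k, ((N *ᵥ v k) ⬝ᵥ u) • v k := by
  have hNs : ∀ i j, N i j = N j i := fun i j => by
    conv_lhs => rw [show N = Nᵀ from hsym.symm, Matrix.transpose_apply]
  set V : Matrix (Fin m) (Fin m) ℝ := Matrix.of (fun i k => v k i) with hV
  have h1 : (Vᵀ * N) * V = 1 := by
    ext k l
    have := horth k l
    simp only [Matrix.mul_apply, Matrix.transpose_apply, Matrix.one_apply, hV,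
      Matrix.of_apply, Matrix.mulVec, dotProduct] at this ⊢
    rw [← this]
    refine Finset.sum_congr rfl fun j _ => ?_
    congr 1
    refine Finset.sum_congr rfl fun i _ => ?_
    rw [hNs i j]; ring
  have h2 : V * (Vᵀ * N) = 1 := mul_eq_one_comm.mpr h1
  have h3 : V *ᵥ ((Vᵀ * N) *ᵥ u) = u := by
    rw [Matrix.mulVec_mulVec, h2, Matrix.one_mulVec]
  conv_lhs => rw [← h3]
  funext i
  simp only [Matrix.mulVec, dotProduct, Finset.sum_apply, Pi.smul_apply, smul_eq_mul,
    Matrix.mul_apply, hV, Matrix.of_apply, Matrix.transpose_apply]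
  refine Finset.sum_congr rfl fun k _ => ?_
  rw [mul_comm]
  congr 1
  refine Finset.sum_congr rfl fun j _ => ?_
  congr 1
  refine Finset.sum_congr rfl fun i' _ => ?_
  rw [hNs j i']; ring

private lemma dot_sum_right {m : ℕ} (w : Fin m → ℝ) (s : Finset (Fin m))
    (f : Fin m → Fin m → ℝ) :
    w ⬝ᵥ (∑ k ∈ s, f k) = ∑ k ∈ s, w ⬝ᵥ f k := by
  simp only [dotProduct, Finset.sum_apply, Finset.mul_sum]
  exact Finset.sum_comm

theorem stmt9 {m : ℕ}
    (M N : Matrix (Fin m) (Fin m) ℝ)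
    (hM : M.PosSemidef) (hN : N.PosDef)
    (v : Fin m → (Fin m → ℝ)) (lam : Fin m → ℝ)
    (heig : ∀ k, M *ᵥ v k = lam k • (N *ᵥ v k))
    (horth : ∀ k l, (N *ᵥ v k) ⬝ᵥ v l = if k = l then 1 else 0)
    (τ : ℝ) (hτ : 0 < τ)
    (π : (Fin m → ℝ) → (Fin m → ℝ))
    (hπ : ∀ u, π u = ∑ k ∈ Finset.univ.filter (fun k => τ < lam k),
      ((N *ᵥ v k) ⬝ᵥ u) • v k) :
    ∀ u : Fin m → ℝ,
      (u - π u) ⬝ᵥ (M *ᵥ (u - π u)) ≤ τ * (u ⬝ᵥ (N *ᵥ u)) := by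
  intro u
  set F := Finset.univ.filter (fun k => τ < lam k) with hF
  set c : Fin m → ℝ := fun k => (N *ᵥ v k) ⬝ᵥ u with hc
  have hexp : u = ∑ k, c k • v k := expand_aux N hN.1 v horth u
  -- the filtered vector
  have hw : u - π u = ∑ k ∈ Fᶜ, c k • v k := by
    rw [hπ u]
    have h0 : (∑ k ∈ Fᶜ, c k • v k) + (∑ k ∈ F, c k • v k) = u := by
      rw [Finset.sum_compl_add_sum]; exact hexp.symm
    simp only [show ∀ k, (N *ᵥ v k) ⬝ᵥ u = c k from fun _ => rfl]
    conv_lhs => rw [← h0]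
    exact add_sub_cancel_right _ _
  set w : Fin m → ℝ := ∑ k ∈ Fᶜ, c k • v k with hwdef
  rw [hw]
  -- dot of w with N *ᵥ v l
  have hdotw : ∀ l, l ∈ Fᶜ → (N *ᵥ v l) ⬝ᵥ w = c l := by
    intro l hl
    rw [hwdef, dot_sum_right]
    have h1 : ∀ k ∈ Fᶜ, (N *ᵥ v l) ⬝ᵥ (c k • v k) = if l = k then c l else 0 := by
      intro k _
      rw [dotProduct_smul, horth l k]
      by_cases h : l = k <;> simp [h]
    rw [Finset.sum_congr rfl h1, Finset.sum_ite_eq Fᶜ l (fun _ => c l)]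
    simp [hl]
  -- compute quadratic form of M on w
  have hMw : w ⬝ᵥ (M *ᵥ w) = ∑ l ∈ Fᶜ, lam l * c l ^ 2 := by
    have h1 : M *ᵥ w = ∑ l ∈ Fᶜ, (c l * lam l) • (N *ᵥ v l) := by
      rw [hwdef]
      have := map_sum M.mulVecLin (fun k => c k • v k) Fᶜ
      simp only [Matrix.mulVecLin_apply] at this
      rw [this]
      refine Finset.sum_congr rfl fun l _ => ?_
      rw [Matrix.mulVec_smul, heig l, smul_smul]
    rw [h1, dot_sum_right]
    refine Finset.sum_congr rfl fun l hl => ?_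
    rw [dotProduct_smul, dotProduct_comm, hdotw l hl]
    simp; ring
  -- compute quadratic form of N on u
  have hNu : u ⬝ᵥ (N *ᵥ u) = ∑ l, c l ^ 2 := by
    have h1 : N *ᵥ u = ∑ l, c l • (N *ᵥ v l) := by
      conv_lhs => rw [hexp]
      have := map_sum N.mulVecLin (fun k => c k • v k) Finset.univ
      simp only [Matrix.mulVecLin_apply] at this
      rw [this]
      exact Finset.sum_congr rfl fun l _ => Matrix.mulVec_smul N (c l) (v l)
    rw [h1, dot_sum_right]
    refine Finset.sum_congr rfl fun l _ => ?_
    rw [dotProduct_smul, dotProduct_comm]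
    rw [show (N *ᵥ v l) ⬝ᵥ u = c l from rfl]
    simp; ring
  rw [hMw, hNu]
  calc ∑ l ∈ Fᶜ, lam l * c l ^ 2
      ≤ ∑ l ∈ Fᶜ, τ * c l ^ 2 := by
        refine Finset.sum_le_sum fun l hl => ?_
        have hlam : lam l ≤ τ := by
          simp only [hF, Finset.mem_compl, Finset.mem_filter, Finset.mem_univ, true_and,
            not_lt] at hl
          exact hl
        exact mul_le_mul_of_nonneg_right hlam (sq_nonneg _)
    _ ≤ τ * ∑ l, c l ^ 2 := by
        rw [← Finset.mul_sum]
        refine mul_le_mul_of_nonneg_left ?_ hτ.le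
        exact Finset.sum_le_sum_of_subset_of_nonneg (Finset.subset_univ _)
          (fun l _ _ => sq_nonneg _)
end
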